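/- Lower bound for the sum cost objective: let n = 2 and let A be the multiset {−1, −1, 1, 1}. For every deterministic strategyproof mechanism f and every δ > 0, there exists a location profile x ∈ ℝ^2 with sc(OPT, x) > 0 and sc(f(x), x) > (3 − δ) · sc(OPT, x), where sc(OPT, x) = min over feasible outcomes y of sc(y, x). Hence no deterministic strategyproof mechanism achieves approximation ratio 3 − δ for any δ > 0 under the sum cost objective. -/

import Mathlib

/-- Max-variant cost of an agent at `t` for two facilities at `y = (y₁, y₂)`. -/
noncomputable def cost (y : ℝ × ℝ) (t : ℝ) : ℝ := max |y.1 - t| |y.2 - t|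

/-- Feasible outcomes for the alternative multiset `A = {-1, -1, 1, 1}`: each of the
two facilities is placed at a distinct copy, so each coordinate is `-1` or `1`. -/
def Feas (y : ℝ × ℝ) : Prop := (y.1 = -1 ∨ y.1 = 1) ∧ (y.2 = -1 ∨ y.2 = 1)

/-- Sum cost for two agents. -/
noncomputable def sc2 (y : ℝ × ℝ) (x : Fin 2 → ℝ) : ℝ := ∑ i, cost y (x i)

lemma feas_cases {y : ℝ × ℝ} (hy : Feas y) :
    y = (-1,-1) ∨ y = (-1,1) ∨ y = (1,-1) ∨ y = (1,1) := by
  obtain ⟨a, b⟩ := y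
  obtain ⟨rfl | rfl, rfl | rfl⟩ := hy <;> simp

lemma cost_pp (t : ℝ) : cost (1,1) t = |1 - t| := by
  simp [cost]

lemma cost_mm (t : ℝ) : cost (-1,-1) t = |1 + t| := by
  simp only [cost, max_self]
  rw [show (-1:ℝ) - t = -(1 + t) by ring, abs_neg]

lemma cost_mp (t : ℝ) (h1 : -1 ≤ t) (h2 : t ≤ 1) : cost (-1,1) t = 1 + |t| := by
  simp only [cost]
  rw [show (-1:ℝ) - t = -(1 + t) by ring, abs_neg,
    abs_of_nonneg (by linarith : (0:ℝ) ≤ 1 + t),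
    abs_of_nonneg (by linarith : (0:ℝ) ≤ 1 - t)]
  rcases le_total 0 t with h | h
  · rw [abs_of_nonneg h, max_eq_left (by linarith)]
  · rw [abs_of_nonpos h, max_eq_right (by linarith)]; ring

lemma cost_pm (t : ℝ) (h1 : -1 ≤ t) (h2 : t ≤ 1) : cost (1,-1) t = 1 + |t| := by
  have := cost_mp t h1 h2
  simp only [cost] at this ⊢
  rwa [max_comm]

lemma sc2_eval (y : ℝ × ℝ) (a b : ℝ) : sc2 y ![a, b] = cost y a + cost y b := by
  rw [sc2, Fin.sum_univ_two]
  simp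

lemma upd_fst (a b c : ℝ) : Function.update ![a,b] 0 c = ![c,b] := by
  funext i; fin_cases i <;> simp [Function.update]

lemma upd_snd (a b c : ℝ) : Function.update ![a,b] 1 c = ![a,c] := by
  funext i; fin_cases i <;> simp [Function.update]

theorem stmt_5 (f : (Fin 2 → ℝ) → ℝ × ℝ)
    (hfeas : ∀ x : Fin 2 → ℝ, Feas (f x))
    (hsp : ∀ (x : Fin 2 → ℝ) (i : Fin 2) (x' : ℝ),
      cost (f x) (x i) ≤ cost (f (Function.update x i x')) (x i))
    (δ : ℝ) (hδ : 0 < δ) :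
    ∃ x : Fin 2 → ℝ, ∃ yo : ℝ × ℝ, Feas yo ∧
      (∀ y : ℝ × ℝ, Feas y → sc2 yo x ≤ sc2 y x) ∧
      0 < sc2 yo x ∧ (3 - δ) * sc2 yo x < sc2 (f x) x := by
  set ε : ℝ := min δ 1 / 8 with hεdef
  have hε0 : 0 < ε := div_pos (lt_min hδ one_pos) (by norm_num)
  have hεδ : ε ≤ δ / 8 := by
    have := min_le_left δ 1; rw [hεdef]; linarith
  have hε18 : ε ≤ 1 / 8 := by
    have := min_le_right δ 1; rw [hεdef]; linarith
  have hε1 : ε < 1 := by linarith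
  have hkey : (3 - δ) * (1 + ε) < 3 - ε := by nlinarith [mul_pos hδ hε0]
  have habs : |ε| = ε := abs_of_nonneg hε0.le
  have habsn : |(-ε : ℝ)| = ε := by rw [abs_neg, habs]
  have h1p : |(1:ℝ) + ε| = 1 + ε := abs_of_nonneg (by linarith)
  have h1m : |(1:ℝ) - ε| = 1 - ε := abs_of_nonneg (by linarith)
  by_cases hA : f ![ε, -1] = (-1,-1)
  · -- Case B: f(ε,-1) = (-1,-1); derive f(ε,-ε) = (-1,-1), then f(1,-ε) ≠ (1,1),
    -- and the profile (1,-ε) is bad.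
    have hB1 : f ![ε, -ε] = (-1,-1) := by
      have hs := hsp ![ε, -ε] 1 (-1)
      rw [upd_snd, hA] at hs
      simp only [Matrix.cons_val_one, Matrix.head_cons, Matrix.cons_val_zero] at hs
      rw [cost_mm] at hs
      rw [show (1:ℝ) + -ε = 1 - ε by ring, h1m] at hs
      rcases feas_cases (hfeas ![ε, -ε]) with h | h | h | h
      · exact h
      · rw [h, cost_mp (-ε) (by linarith) (by linarith), habsn] at hs; linarith
      · rw [h, cost_pm (-ε) (by linarith) (by linarith), habsn] at hs; linarith
      · rw [h, cost_pp, show (1:ℝ) - -ε = 1 + ε by ring, h1p] at hs; linarith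
    have hB2 : f ![1, -ε] ≠ (1,1) := by
      intro hpp
      have hs := hsp ![ε, -ε] 0 1
      rw [upd_fst, hpp, hB1] at hs
      simp only [Matrix.cons_val_zero] at hs
      rw [cost_mm, h1p, cost_pp, h1m] at hs
      linarith
    -- the bad profile is (1, -ε) with optimum (1,1)
    have vpp : sc2 (1,1) ![1, -ε] = 1 + ε := by
      rw [sc2_eval, cost_pp, cost_pp, show (1:ℝ) - -ε = 1 + ε by ring, h1p]
      norm_num <;> ring
    have vmm : sc2 (-1,-1) ![1, -ε] = 3 - ε := by
      rw [sc2_eval, cost_mm, cost_mm, show (1:ℝ) + -ε = 1 - ε by ring, h1m]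
      norm_num <;> ring
    have vmp : sc2 (-1,1) ![1, -ε] = 3 + ε := by
      rw [sc2_eval, cost_mp 1 (by norm_num) (by norm_num),
        cost_mp (-ε) (by linarith) (by linarith), habsn]
      norm_num <;> ring
    have vpm : sc2 (1,-1) ![1, -ε] = 3 + ε := by
      rw [sc2_eval, cost_pm 1 (by norm_num) (by norm_num),
        cost_pm (-ε) (by linarith) (by linarith), habsn]
      norm_num <;> ring
    refine ⟨![1, -ε], (1,1), ⟨Or.inr rfl, Or.inr rfl⟩, ?_, ?_, ?_⟩
    · intro y hy
      rcases feas_cases hy with rfl | rfl | rfl | rfl <;>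
        simp only [vpp, vmm, vmp, vpm] <;> linarith
    · rw [vpp]; linarith
    · rcases feas_cases (hfeas ![1, -ε]) with h | h | h | h
      · rw [vpp, h, vmm]; linarith
      · rw [vpp, h, vmp]; linarith
      · rw [vpp, h, vpm]; linarith
      · exact absurd h hB2
  · -- Case A: f(ε,-1) ≠ (-1,-1); the profile (ε,-1) is bad with optimum (-1,-1).
    have vmm : sc2 (-1,-1) ![ε, -1] = 1 + ε := by
      rw [sc2_eval, cost_mm, cost_mm, h1p]
      norm_num <;> ring
    have vmp : sc2 (-1,1) ![ε, -1] = 3 + ε := by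
      rw [sc2_eval, cost_mp ε (by linarith) (by linarith),
        cost_mp (-1) (by norm_num) (by norm_num), habs]
      norm_num <;> ring
    have vpm : sc2 (1,-1) ![ε, -1] = 3 + ε := by
      rw [sc2_eval, cost_pm ε (by linarith) (by linarith),
        cost_pm (-1) (by norm_num) (by norm_num), habs]
      norm_num <;> ring
    have vpp : sc2 (1,1) ![ε, -1] = 3 - ε := by
      rw [sc2_eval, cost_pp, cost_pp, h1m]
      norm_num <;> ring
    refine ⟨![ε, -1], (-1,-1), ⟨Or.inl rfl, Or.inl rfl⟩, ?_, ?_, ?_⟩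
    · intro y hy
      rcases feas_cases hy with rfl | rfl | rfl | rfl <;>
        simp only [vmm, vmp, vpm, vpp] <;> linarith
    · rw [vmm]; linarith
    · rcases feas_cases (hfeas ![ε, -1]) with h | h | h | h
      · exact absurd h hA
      · rw [vmm, h, vmp]; linarith
      · rw [vmm, h, vpm]; linarith
      · rw [vmm, h, vpp]; linarith
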